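/- Assume (A1)–(A4), (Aa), (Ab), (Ac), and that λ and Q do not depend on the control variable a. Let m ≥ 1 and suppose that v_{m−1}^δ(·,γ) is continuous on Ḡ for every γ ∈ E. Then for every T > 0 and every (x,γ) ∈ Ḡ × E: v_m^δ(x,γ) = inf over α ∈ 𝒜_{γ,x} of { ∫_0^T e^{−δt} Λ(t) [ l_γ(y(t), α(t)) + λ(y(t),γ) Σ_{γ′∈E} Q(y(t),γ,γ′) v_{m−1}^δ(y(t),γ′) ] dt + e^{−δT} Λ(T) v_m^δ(y(T),γ) }, where y(t) = y_γ(t;x,α) and Λ(t) = exp(−∫_0^t λ(y(s),γ) ds). (This is the dynamic programming principle for the iterated value functions on the horizon T.) -/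

import Mathlib

open MeasureTheory Set Real Filter
open scoped RealInnerProductSpace BigOperators Topology

noncomputable section

/-- `Vec n` is Euclidean space `ℝ^n`. -/
abbrev Vec (n : ℕ) : Type := EuclideanSpace ℝ (Fin n)

/-- `y` is the (absolutely continuous) trajectory of the controlled ODE
`y'(t) = f(y(t), α(t))`, `y(0) = x`, written in integral form. -/
def IsTraj {m : ℕ} {U : Type} (f : Vec m → U → Vec m) (x : Vec m) (α : ℝ → U)
    (y : ℝ → Vec m) : Prop :=
  ∀ t : ℝ, 0 ≤ t → y t = x + ∫ s in (0:ℝ)..t, f (y s) (α s)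

/-- `(α, y)` is an admissible control/trajectory pair: `α` is Borel measurable with
values in `A`, `y` is the corresponding trajectory and it stays in `S` for `t ≥ 0`. -/
def AdmPair {m : ℕ} {U : Type} [MeasurableSpace U] (f : Vec m → U → Vec m)
    (A : Set U) (S : Set (Vec m)) (x : Vec m) (α : ℝ → U) (y : ℝ → Vec m) : Prop :=
  Measurable α ∧ (∀ t : ℝ, α t ∈ A) ∧ IsTraj f x α y ∧ ∀ t : ℝ, 0 ≤ t → y t ∈ S

/-- The closed star-shaped network `Ḡ = ∪_j [0,1] e_j`. -/
def Gbar {m N : ℕ} (e : Fin N → Vec m) : Set (Vec m) :=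
  ⋃ j, (fun r : ℝ => r • e j) '' Icc (0:ℝ) 1

/-- `𝒢 = ∪_j [0,1) e_j`. -/
def GbarOpen {m N : ℕ} (e : Fin N → Vec m) : Set (Vec m) :=
  ⋃ j, (fun r : ℝ => r • e j) '' Ico (0:ℝ) 1

/-- The open branch `J_j = (0,1) e_j`. -/
def Jbranch {m N : ℕ} (e : Fin N → Vec m) (j : Fin N) : Set (Vec m) :=
  (fun r : ℝ => r • e j) '' Ioo (0:ℝ) 1

/-- The constant control `a` is locally admissible at `x` (keeps some trajectory in `S`
on a nontrivial interval `[0,θ]`). -/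
def LocAdm {m : ℕ} {U : Type} (f : Vec m → U → Vec m) (S : Set (Vec m)) (x : Vec m)
    (a : U) : Prop :=
  ∃ θ > (0:ℝ), ∃ y : ℝ → Vec m,
    IsTraj f x (fun _ => a) y ∧ ∀ t ∈ Icc (0:ℝ) θ, y t ∈ S

/-- The set `A_{γ,x}` of locally admissible constant controls at `x`. -/
def LocAdmSet {m : ℕ} {U : Type} (f : Vec m → U → Vec m) (A : Set U) (S : Set (Vec m))
    (x : Vec m) : Set U :=
  {a ∈ A | LocAdm f S x a}

/-- Assumption (A1). -/
def AssumptionA1 {m d : ℕ} {E : Type} (A : Set (Vec d)) (f : E → Vec m → Vec d → Vec m)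
    (C : ℝ) : Prop :=
  ∀ γ : E, UniformContinuousOn (fun p : Vec m × Vec d => f γ p.1 p.2) (univ ×ˢ A) ∧
    (∀ x y : Vec m, ∀ a ∈ A, ⟪f γ x a - f γ y a, x - y⟫ ≤ C * ‖x - y‖ ^ 2) ∧
    (∀ x : Vec m, ∀ a ∈ A, ‖f γ x a‖ ≤ C)

/-- Assumption (A2). -/
def AssumptionA2 {m d : ℕ} {E : Type} (A : Set (Vec d))
    (lam : Vec m → E → Vec d → ℝ) (C : ℝ) : Prop :=
  ∀ γ : E, UniformContinuousOn (fun p : Vec m × Vec d => lam p.1 γ p.2) (univ ×ˢ A) ∧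
    ∀ x y : Vec m, ∀ a ∈ A, 0 ≤ lam x γ a ∧ lam x γ a ≤ C ∧
      |lam x γ a - lam y γ a| ≤ C * ‖x - y‖

/-- Assumption (A3). -/
def AssumptionA3 {m d : ℕ} {E : Type} [Fintype E] (A : Set (Vec d))
    (Q : Vec m → E → E → Vec d → ℝ) (C : ℝ) : Prop :=
  ∀ (x y : Vec m) (γ : E), ∀ a ∈ A,
    (∀ γ' : E, 0 ≤ Q x γ γ' a ∧ Q x γ γ' a ≤ 1) ∧
    (∑ γ' : E, Q x γ γ' a) = 1 ∧ Q x γ γ a = 0 ∧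
    (∀ γ' : E, |Q x γ γ' a - Q y γ γ' a| ≤ C * ‖x - y‖)

/-- Assumption (A4). -/
def AssumptionA4 {m d : ℕ} {E : Type} (A : Set (Vec d)) (l : E → Vec m → Vec d → ℝ)
    (C : ℝ) : Prop :=
  ∀ γ : E, UniformContinuousOn (fun p : Vec m × Vec d => l γ p.1 p.2) (univ ×ˢ A) ∧
    ∀ x y : Vec m, ∀ a ∈ A, |l γ x a| ≤ C ∧ |l γ x a - l γ y a| ≤ C * ‖x - y‖

/-- Assumption (Aa). -/
def AssumptionAa {m d N : ℕ} {E : Type} (e : Fin N → Vec m) (A : Set (Vec d))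
    (f : E → Vec m → Vec d → Vec m) (Asets : E → Fin N → Set (Vec d)) (β : ℝ) : Prop :=
  (∀ (γ : E) (j : Fin N), (Asets γ j).Nonempty ∧ Asets γ j ⊆ A) ∧
  (∀ (γ : E) (j : Fin N), ∀ x ∈ Jbranch e j,
      LocAdmSet (f γ) A (Gbar e) x = Asets γ j) ∧
  (∀ γ : E, LocAdmSet (f γ) A (Gbar e) 0
      = ⋃ j, {a ∈ Asets γ j | ∃ r : ℝ, 0 ≤ r ∧ f γ 0 a = r • e j}) ∧
  (∀ (γ : E) (j : Fin N),
      LocAdmSet (f γ) A (Gbar e) (e j) = {a ∈ Asets γ j | ⟪f γ (e j) a, e j⟫ ≤ 0} ∧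
      {a ∈ Asets γ j | ⟪f γ (e j) a, e j⟫ ≤ 0}.Nonempty) ∧
  (∀ (γ : E) (j : Fin N),
      {a ∈ Asets γ j | ⟪f γ (e j) a, e j⟫ ≤ 0} = Asets γ j ∨
      ∃ a ∈ Asets γ j, ⟪f γ (e j) a, e j⟫ < -β)

/-- Assumption (Ab); `act j` is the set of modes for which branch `j` is active. -/
def AssumptionAb {m d N : ℕ} {E : Type} (e : Fin N → Vec m)
    (f : E → Vec m → Vec d → Vec m) (Asets : E → Fin N → Set (Vec d))
    (act : Fin N → Set E) (β η κ : ℝ) : Prop :=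
  (∀ (j : Fin N), ∀ γ ∈ act j,
      ∃ ap ∈ Asets γ j, ∃ am ∈ Asets γ j,
        β < ⟪f γ 0 ap, e j⟫ ∧ ⟪f γ 0 am, e j⟫ < -β) ∧
  (∀ (j : Fin N), ∀ γ : E, γ ∉ act j →
      (∃ am ∈ Asets γ j, ∀ x ∈ Jbranch e j, ‖x‖ ≤ η →
          ⟪f γ x am, e j⟫ ≤ -β * ⟪x, e j⟫ ^ κ) ∧
      (∃ a0 ∈ Asets γ j, f γ 0 a0 = 0) ∧
      (∀ a ∈ Asets γ j, ∀ x ∈ Jbranch e j, ‖x‖ ≤ η → ⟪f γ x a, e j⟫ ≤ 0))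

/-- Assumption (Ac). -/
def AssumptionAc {m d N : ℕ} {E : Type} (l : E → Vec m → Vec d → ℝ)
    (Asets : E → Fin N → Set (Vec d)) (act : Fin N → Set E) : Prop :=
  ∀ (j : Fin N), ∀ γ : E, γ ∉ act j →
    ∀ a ∈ Asets γ j, ∀ b ∈ Asets γ j, l γ 0 a = l γ 0 b

/-- Assumption (Ac'). -/
def AssumptionAc' {m d N : ℕ} {E : Type} (lam : Vec m → E → Vec d → ℝ)
    (Q : Vec m → E → E → Vec d → ℝ) (Asets : E → Fin N → Set (Vec d))
    (act : Fin N → Set E) : Prop :=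
  ∀ (j : Fin N), ∀ γ : E, γ ∉ act j → ∀ a ∈ Asets γ j, ∀ b ∈ Asets γ j,
    lam 0 γ a = lam 0 γ b ∧ ∀ γ' : E, Q 0 γ γ' a = Q 0 γ γ' b

/-- Assumption (Ad). -/
def AssumptionAd {m d N : ℕ} {E : Type} (e : Fin N → Vec m) (A : Set (Vec d))
    (f : E → Vec m → Vec d → Vec m) (Asets : E → Fin N → Set (Vec d)) : Prop :=
  ∀ (j : Fin N) (γ : E), ∀ x ∈ Jbranch e j, ∃ θ > (0:ℝ),
    ∀ (α : ℝ → Vec d) (y : ℝ → Vec m), AdmPair (f γ) A (Gbar e) x α y →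
      ∀ᵐ t ∂(volume.restrict (Icc (0:ℝ) θ)), α t ∈ Asets γ j

/-- The set of discounted costs of admissible control/trajectory pairs (deterministic
problem); its infimum is the value function `v_0^δ`. -/
def v0Set {m : ℕ} {U E : Type} [MeasurableSpace U] (δ : ℝ)
    (f : E → Vec m → U → Vec m) (A : E → Set U) (S : Set (Vec m))
    (l : E → Vec m → U → ℝ) (x : Vec m) (γ : E) : Set ℝ :=
  {c | ∃ (α : ℝ → U) (y : ℝ → Vec m), AdmPair (f γ) (A γ) S x α y ∧
        c = ∫ t in Ioi (0:ℝ), exp (-(δ * t)) * l γ (y t) (α t)}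

/-- The set of one-jump iterated discounted costs with continuation value `w`;
its infimum is the iterated value function  `v_{m+1}^δ` when `w = v_m^δ`. -/
def iterSet {m : ℕ} {U E : Type} [MeasurableSpace U] [Fintype E] (δ : ℝ)
    (f : E → Vec m → U → Vec m) (A : E → Set U) (S : Set (Vec m))
    (l : E → Vec m → U → ℝ) (lam : Vec m → E → U → ℝ)
    (Q : Vec m → E → E → U → ℝ) (w : Vec m → E → ℝ) (x : Vec m) (γ : E) : Set ℝ :=
  {c | ∃ (α : ℝ → U) (y : ℝ → Vec m), AdmPair (f γ) (A γ) S x α y ∧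
        c = ∫ t in Ioi (0:ℝ),
              exp (-(δ * t)) * exp (-(∫ s in (0:ℝ)..t, lam (y s) γ (α s))) *
              (l γ (y t) (α t) +
                lam (y t) γ (α t) * ∑ γ' : E, Q (y t) γ γ' (α t) * w (y t) γ')}

/-- The set of costs appearing in the dynamic programming principle on horizon `T`,
with running continuation value `wcont` and terminal value `wend`. -/
def dppSet {m : ℕ} {U E : Type} [MeasurableSpace U] [Fintype E] (δ T : ℝ)
    (f : E → Vec m → U → Vec m) (A : E → Set U) (S : Set (Vec m))
    (l : E → Vec m → U → ℝ) (lam : Vec m → E → U → ℝ)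
    (Q : Vec m → E → E → U → ℝ) (wcont wend : Vec m → E → ℝ)
    (x : Vec m) (γ : E) : Set ℝ :=
  {c | ∃ (α : ℝ → U) (y : ℝ → Vec m), AdmPair (f γ) (A γ) S x α y ∧
        c = (∫ t in (0:ℝ)..T,
              exp (-(δ * t)) * exp (-(∫ s in (0:ℝ)..t, lam (y s) γ (α s))) *
              (l γ (y t) (α t) +
                lam (y t) γ (α t) * ∑ γ' : E, Q (y t) γ γ' (α t) * wcont (y t) γ'))
            + exp (-(δ * T)) * exp (-(∫ s in (0:ℝ)..T, lam (y s) γ (α s)))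
              * wend (y T) γ}

/-- The tangent cone `T_x(Ḡ)` to the star network at `x`. -/
def TangentG {m N : ℕ} (e : Fin N → Vec m) (x : Vec m) : Set (Vec m) :=
  {ξ | (x = 0 ∧ ∃ (j : Fin N) (r : ℝ), 0 ≤ r ∧ ξ = r • e j) ∨
       (∃ j : Fin N, x = e j ∧ ∃ r : ℝ, r ≤ 0 ∧ ξ = r • e j) ∨
       (∃ j : Fin N, x ∈ Jbranch e j ∧ ∃ r : ℝ, ξ = r • e j)}

/-- `fl(x,γ,a) = (f_γ(x,a), λ(x,γ,a) Q(x,γ,·,a), l_γ(x,a))`. -/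
def flMap {m d : ℕ} {E : Type} (f : E → Vec m → Vec d → Vec m)
    (lam : Vec m → E → Vec d → ℝ) (Q : Vec m → E → E → Vec d → ℝ)
    (l : E → Vec m → Vec d → ℝ) (x : Vec m) (γ : E) :
    Vec d → Vec m × (E → ℝ) × ℝ :=
  fun a => (f γ x a, fun γ' => lam x γ a * Q x γ γ' a, l γ x a)

/-- The set `FL(x,γ)` of relaxed dynamics/jump/cost limits. -/
def FLset {m d N : ℕ} {E : Type} [Fintype E] (e : Fin N → Vec m) (A : Set (Vec d))
    (f : E → Vec m → Vec d → Vec m) (lam : Vec m → E → Vec d → ℝ)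
    (Q : Vec m → E → E → Vec d → ℝ) (l : E → Vec m → Vec d → ℝ)
    (x : Vec m) (γ : E) : Set (Vec m × (E → ℝ) × ℝ) :=
  {p | p.1 ∈ TangentG e x ∧ (∀ γ' : E, 0 ≤ p.2.1 γ') ∧
    ∃ (αs : ℕ → ℝ → Vec d) (ys : ℕ → ℝ → Vec m) (ts : ℕ → ℝ),
      (∀ n, AdmPair (f γ) A (Gbar e) x (αs n) (ys n)) ∧
      (∀ n, 0 < ts n) ∧ Tendsto ts atTop (nhds 0) ∧
      Tendsto (fun n => (ts n)⁻¹ • (∫ s in (0:ℝ)..ts n, f γ x (αs n s)))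
        atTop (nhds p.1) ∧
      (∀ γ' : E, Tendsto
          (fun n => (ts n)⁻¹ * ∫ s in (0:ℝ)..ts n, lam x γ (αs n s) * Q x γ γ' (αs n s))
          atTop (nhds (p.2.1 γ'))) ∧
      Tendsto (fun n => (ts n)⁻¹ * ∫ s in (0:ℝ)..ts n, l γ x (αs n s))
        atTop (nhds p.2.2)}

section Helpers
variable {m d : ℕ}

lemma aemeasurable_comp_continuousOn {X Y : Type*} [TopologicalSpace X] [MeasurableSpace X]
    [OpensMeasurableSpace X] [TopologicalSpace Y] [MeasurableSpace Y] [BorelSpace Y]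
    {f : X → Y} {s : Set X} (hf : ContinuousOn f s) (hs : MeasurableSet s)
    {g : ℝ → X} {μ : Measure ℝ} (hg : AEMeasurable g μ) (hmem : ∀ᵐ t ∂μ, g t ∈ s) :
    AEMeasurable (fun t => f (g t)) μ := by
  have hmap : AEMeasurable f (μ.map g) := by
    have hres : (μ.map g).restrict s = μ.map g :=
      Measure.restrict_eq_self_of_ae_mem ((ae_map_iff hg hs).2 hmem)
    rw [← hres]
    exact hf.aemeasurable hs
  exact hmap.comp_aemeasurable hg

variable {F : Vec m → Vec d → Vec m} {A : Set (Vec d)} {C : ℝ}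
  {x : Vec m} {α : ℝ → Vec d} {y : ℝ → Vec m}

lemma traj_vec_aesm
    (hFc : ContinuousOn (fun p : Vec m × Vec d => F p.1 p.2) (univ ×ˢ A))
    (hAm : MeasurableSet A)
    (hα : Measurable α) (hαA : ∀ t, α t ∈ A) (hy : IsTraj F x α y) :
    ∀ t : ℝ, AEStronglyMeasurable (fun s => F (y s) (α s)) (volume.restrict (Ioc 0 t)) := by
  set g : ℝ → Vec m := fun s => F (y s) (α s) with hgdef
  by_contra hbad
  push_neg at hbad
  obtain ⟨t₀, ht₀⟩ := hbad
  set Sb : Set ℝ := {t | ¬ AEStronglyMeasurable g (volume.restrict (Ioc 0 t))} with hSb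
  have hSbne : Sb.Nonempty := ⟨t₀, ht₀⟩
  have hmono : ∀ u v : ℝ, u ≤ v → u ∈ Sb → v ∈ Sb := by
    intro u v huv hu h
    exact hu (h.mono_measure (Measure.restrict_mono (Ioc_subset_Ioc_right huv) le_rfl))
  have hSbpos : ∀ t ∈ Sb, (0:ℝ) < t := by
    intro t ht
    by_contra h
    push_neg at h
    apply ht
    rw [Ioc_eq_empty (by exact fun hlt => absurd hlt (not_lt.2 h)), Measure.restrict_empty]
    exact aestronglyMeasurable_zero_measure g
  set u : ℝ := sInf Sb with hu
  have hbdd : BddBelow Sb := ⟨0, fun t ht => (hSbpos t ht).le⟩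
  have hu0 : 0 ≤ u := le_csInf hSbne (fun t ht => (hSbpos t ht).le)
  have hbad' : ∀ t, u < t → ¬ AEStronglyMeasurable g (volume.restrict (Ioc 0 t)) := by
    intro t ht
    obtain ⟨s, hsSb, hst⟩ := (csInf_lt_iff hbdd hSbne).1 ht
    exact hmono s t hst.le hsSb
  have hgood : ∀ t, t < u → AEStronglyMeasurable g (volume.restrict (Ioc 0 t)) := by
    intro t ht
    by_contra h
    exact absurd (csInf_le hbdd h) (not_le.2 ht)
  -- y t = x  for t > u
  have hyx : ∀ t, u < t → y t = x := by
    intro t ht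
    have h0t : (0:ℝ) ≤ t := hu0.trans ht.le
    have heq := hy t h0t
    rw [intervalIntegral.integral_of_le h0t, MeasureTheory.integral_undef] at heq
    · simpa using heq
    · intro hint
      exact hbad' t ht hint.1
  -- g is a.e.-strongly measurable on (u, ∞)
  have hemb : Continuous (fun a : Vec d => ((x, a) : Vec m × Vec d)) :=
    continuous_const.prodMk continuous_id
  have hslice : ContinuousOn (fun a => F x a) A := fun a ha =>
    ((hFc (x, a) (by simp [ha])).comp hemb.continuousWithinAt (fun b hb => by simp [hb]))
  have h1 : AEStronglyMeasurable g (volume.restrict (Ioi u)) := by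
    have hae : AEMeasurable (fun s => F x (α s)) (volume.restrict (Ioi u)) :=
      aemeasurable_comp_continuousOn hslice hAm hα.aemeasurable (ae_of_all _ hαA)
    refine hae.aestronglyMeasurable.congr ?_
    filter_upwards [ae_restrict_of_forall_mem measurableSet_Ioi
      (fun s (hs : s ∈ Ioi u) => hyx s hs)] with s hs
    simp [hgdef, hs]
  -- g is a.e.-strongly measurable on (0, u)
  have h2 : AEStronglyMeasurable g (volume.restrict (Ioo 0 u)) := by
    have hcover : Ioo (0:ℝ) u ⊆ ⋃ n : ℕ, Ioc 0 (u - 1/(n+1)) := by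
      intro s hs
      obtain ⟨n, hn⟩ := exists_nat_one_div_lt (sub_pos.2 hs.2)
      exact mem_iUnion.2 ⟨n, hs.1, by linarith⟩
    refine AEStronglyMeasurable.mono_measure ?_
      (Measure.restrict_mono hcover le_rfl)
    rw [aestronglyMeasurable_iUnion_iff]
    intro n
    by_cases hc : u - 1/(n+1) < u
    · exact hgood _ hc
    · exfalso
      apply hc
      have hpos : (0:ℝ) < 1/(n+1) := by positivity
      linarith
  -- combine for arbitrary t, contradiction
  apply ht₀
  have hsub : Ioc (0:ℝ) t₀ ⊆ (Ioo 0 u ∪ {u}) ∪ Ioi u := by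
    intro s hs
    rcases lt_trichotomy s u with h | h | h
    · exact Or.inl (Or.inl ⟨hs.1, h⟩)
    · exact Or.inl (Or.inr (by simp [h]))
    · exact Or.inr h
  refine AEStronglyMeasurable.mono_measure ?_ (Measure.restrict_mono hsub le_rfl)
  have h3 : AEStronglyMeasurable g (volume.restrict (Ioo 0 u ∪ {u})) := by
    refine AEStronglyMeasurable.mono_measure ?_
      (Measure.restrict_union_le _ _)
    exact h2.add_measure (by
      rw [Measure.restrict_eq_zero.2 (by simp)]
      exact aestronglyMeasurable_zero_measure g)
  refine AEStronglyMeasurable.mono_measure ?_ (Measure.restrict_union_le _ _)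
  exact h3.add_measure h1

lemma traj_integrableOn
    (hFc : ContinuousOn (fun p : Vec m × Vec d => F p.1 p.2) (univ ×ˢ A))
    (hAm : MeasurableSet A) (hFb : ∀ z : Vec m, ∀ a ∈ A, ‖F z a‖ ≤ C)
    (hα : Measurable α) (hαA : ∀ t, α t ∈ A) (hy : IsTraj F x α y) :
    ∀ t : ℝ, IntegrableOn (fun s => F (y s) (α s)) (Ioc 0 t) := by
  intro t
  have hfin : IsFiniteMeasure (volume.restrict (Ioc (0:ℝ) t)) := by
    constructor
    simp [Real.volume_Ioc, lt_top_iff_ne_top]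
  refine Integrable.mono' (g := fun _ => C) (integrable_const C)
    (traj_vec_aesm hFc hAm hα hαA hy t) ?_
  exact ae_of_all _ (fun s => hFb _ _ (hαA s))

lemma traj_intervalIntegrable
    (hFc : ContinuousOn (fun p : Vec m × Vec d => F p.1 p.2) (univ ×ˢ A))
    (hAm : MeasurableSet A) (hFb : ∀ z : Vec m, ∀ a ∈ A, ‖F z a‖ ≤ C)
    (hα : Measurable α) (hαA : ∀ t, α t ∈ A) (hy : IsTraj F x α y) :
    ∀ a b : ℝ, 0 ≤ a → 0 ≤ b →
      IntervalIntegrable (fun s => F (y s) (α s)) volume a b := by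
  have key : ∀ a b : ℝ, 0 ≤ a → a ≤ b →
      IntervalIntegrable (fun s => F (y s) (α s)) volume a b := by
    intro a b ha hab
    rw [intervalIntegrable_iff_integrableOn_Ioc_of_le hab]
    exact (traj_integrableOn hFc hAm hFb hα hαA hy b).mono_set
      (Ioc_subset_Ioc_left ha)
  intro a b ha hb
  rcases le_total a b with h | h
  · exact key a b ha h
  · exact (key b a hb h).symm

lemma traj_continuousOn
    (hFc : ContinuousOn (fun p : Vec m × Vec d => F p.1 p.2) (univ ×ˢ A))
    (hAm : MeasurableSet A) (hFb : ∀ z : Vec m, ∀ a ∈ A, ‖F z a‖ ≤ C)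
    (hα : Measurable α) (hαA : ∀ t, α t ∈ A) (hy : IsTraj F x α y) :
    ∀ b : ℝ, ContinuousOn y (Icc 0 b) := by
  intro b
  have hint : IntegrableOn (fun s => F (y s) (α s)) (Icc 0 b) := by
    rcases le_or_gt 0 b with hb | hb
    · have : IntegrableOn (fun s => F (y s) (α s)) ({0} ∪ Ioc 0 b) := by
        refine IntegrableOn.union ?_ (traj_integrableOn hFc hAm hFb hα hαA hy b)
        simp [IntegrableOn]
      refine this.mono_set ?_
      rw [← Ioc_insert_left hb, insert_eq]
    · simp [Icc_eq_empty (not_le.2 hb), IntegrableOn]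
  have h1 : ContinuousOn (fun t => x + ∫ s in Ioc 0 t, F (y s) (α s)) (Icc 0 b) :=
    continuousOn_const.add (intervalIntegral.continuousOn_primitive hint)
  refine h1.congr ?_
  intro t ht
  rw [hy t ht.1, intervalIntegral.integral_of_le ht.1]

lemma traj_y_aesm
    (hFc : ContinuousOn (fun p : Vec m × Vec d => F p.1 p.2) (univ ×ˢ A))
    (hAm : MeasurableSet A) (hFb : ∀ z : Vec m, ∀ a ∈ A, ‖F z a‖ ≤ C)
    (hα : Measurable α) (hαA : ∀ t, α t ∈ A) (hy : IsTraj F x α y) :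
    AEStronglyMeasurable y (volume.restrict (Ioi 0)) := by
  have hcov : Ioi (0:ℝ) ⊆ ⋃ n : ℕ, Ioc 0 n := by
    intro t ht
    obtain ⟨n, hn⟩ := exists_nat_ge t
    exact mem_iUnion.2 ⟨n, ht, hn⟩
  refine AEStronglyMeasurable.mono_measure ?_ (Measure.restrict_mono hcov le_rfl)
  rw [aestronglyMeasurable_iUnion_iff]
  intro n
  exact (((traj_continuousOn hFc hAm hFb hα hαA hy n).mono
    Ioc_subset_Icc_self).aemeasurable measurableSet_Ioc).aestronglyMeasurable

variable {L : Vec m → ℝ} {R : Vec m → Vec d → ℝ} {S : Set (Vec m)} {δ MR : ℝ}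

/-- The cost integrand. -/
def costI {m d : ℕ} (δ : ℝ) (L : Vec m → ℝ) (R : Vec m → Vec d → ℝ)
    (α : ℝ → Vec d) (y : ℝ → Vec m) (t : ℝ) : ℝ :=
  exp (-(δ * t)) * exp (-(∫ s in (0:ℝ)..t, L (y s))) * R (y t) (α t)

lemma L_intervalIntegrable (hLc : Continuous L)
    (hFc : ContinuousOn (fun p : Vec m × Vec d => F p.1 p.2) (univ ×ˢ A))
    (hAm : MeasurableSet A) (hFb : ∀ z : Vec m, ∀ a ∈ A, ‖F z a‖ ≤ C)
    (hα : Measurable α) (hαA : ∀ t, α t ∈ A) (hy : IsTraj F x α y) :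
    ∀ a b : ℝ, 0 ≤ a → 0 ≤ b → IntervalIntegrable (fun s => L (y s)) volume a b := by
  intro a b ha hb
  refine ContinuousOn.intervalIntegrable ?_
  refine (hLc.comp_continuousOn (traj_continuousOn hFc hAm hFb hα hαA hy (max a b))).mono ?_
  rw [uIcc_eq_union]
  exact union_subset (Icc_subset_Icc ha (le_max_right a b))
    (Icc_subset_Icc hb (le_max_left a b))

lemma ell_continuousOn (hLc : Continuous L)
    (hFc : ContinuousOn (fun p : Vec m × Vec d => F p.1 p.2) (univ ×ˢ A))
    (hAm : MeasurableSet A) (hFb : ∀ z : Vec m, ∀ a ∈ A, ‖F z a‖ ≤ C)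
    (hα : Measurable α) (hαA : ∀ t, α t ∈ A) (hy : IsTraj F x α y) :
    ∀ b : ℝ, ContinuousOn (fun t => ∫ s in (0:ℝ)..t, L (y s)) (Icc 0 b) := by
  intro b
  have hint : IntegrableOn (fun s => L (y s)) (Icc 0 b) :=
    (hLc.comp_continuousOn (traj_continuousOn hFc hAm hFb hα hαA hy b)).integrableOn_Icc
  refine (intervalIntegral.continuousOn_primitive hint).congr ?_
  intro t ht
  simp only
  rw [intervalIntegral.integral_of_le ht.1]

lemma costI_aesm (hLc : Continuous L) (hδ : 0 < δ)
    (hSm : MeasurableSet S)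
    (hRc : ContinuousOn (fun p : Vec m × Vec d => R p.1 p.2) (S ×ˢ A))
    (hFc : ContinuousOn (fun p : Vec m × Vec d => F p.1 p.2) (univ ×ˢ A))
    (hAm : MeasurableSet A) (hFb : ∀ z : Vec m, ∀ a ∈ A, ‖F z a‖ ≤ C)
    (hα : Measurable α) (hαA : ∀ t, α t ∈ A) (hy : IsTraj F x α y)
    (hyS : ∀ t : ℝ, 0 ≤ t → y t ∈ S) :
    AEStronglyMeasurable (costI δ L R α y) (volume.restrict (Ioi 0)) := by
  have f1 : AEStronglyMeasurable (fun t : ℝ => exp (-(δ * t)))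
      (volume.restrict (Ioi 0)) :=
    (Real.continuous_exp.comp (continuous_const.mul continuous_id).neg).aestronglyMeasurable
  have f2 : AEStronglyMeasurable (fun t : ℝ => exp (-(∫ s in (0:ℝ)..t, L (y s))))
      (volume.restrict (Ioi 0)) := by
    have hcov : Ioi (0:ℝ) ⊆ ⋃ n : ℕ, Ioc 0 n := by
      intro t ht
      obtain ⟨n, hn⟩ := exists_nat_ge t
      exact mem_iUnion.2 ⟨n, ht, hn⟩
    refine AEStronglyMeasurable.mono_measure ?_ (Measure.restrict_mono hcov le_rfl)
    rw [aestronglyMeasurable_iUnion_iff]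
    intro n
    have hc : ContinuousOn (fun t : ℝ => exp (-(∫ s in (0:ℝ)..t, L (y s)))) (Ioc 0 n) :=
      (Real.continuous_exp.comp_continuousOn
        ((ell_continuousOn hLc hFc hAm hFb hα hαA hy n).neg)).mono Ioc_subset_Icc_self
    exact ((hc.aemeasurable measurableSet_Ioc).aestronglyMeasurable)
  have f3 : AEStronglyMeasurable (fun t : ℝ => R (y t) (α t))
      (volume.restrict (Ioi 0)) := by
    have hpair : AEMeasurable (fun t : ℝ => ((y t, α t) : Vec m × Vec d))
        (volume.restrict (Ioi 0)) :=
      (traj_y_aesm hFc hAm hFb hα hαA hy).aemeasurable.prodMk hα.aemeasurable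
    have hmem : ∀ᵐ t ∂(volume.restrict (Ioi (0:ℝ))), ((y t, α t) : Vec m × Vec d) ∈ S ×ˢ A :=
      ae_restrict_of_forall_mem measurableSet_Ioi
        (fun t ht => ⟨hyS t (le_of_lt ht), hαA t⟩)
    exact (aemeasurable_comp_continuousOn hRc (hSm.prod hAm) hpair hmem).aestronglyMeasurable
  exact (f1.mul f2).mul f3

lemma costI_bound (hLnn : ∀ z, 0 ≤ L z) (hMR : 0 ≤ MR)
    (hRb : ∀ z ∈ S, ∀ a ∈ A, |R z a| ≤ MR)
    (hαA : ∀ t, α t ∈ A) (hyS : ∀ t : ℝ, 0 ≤ t → y t ∈ S) :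
    ∀ t : ℝ, 0 ≤ t → |costI δ L R α y t| ≤ MR * exp (-(δ * t)) := by
  intro t ht
  have h2 : exp (-(∫ s in (0:ℝ)..t, L (y s))) ≤ 1 := by
    rw [exp_le_one_iff, neg_nonpos]
    exact intervalIntegral.integral_nonneg ht (fun u _ => hLnn _)
  have h3 : |R (y t) (α t)| ≤ MR := hRb _ (hyS t ht) _ (hαA t)
  have e1 : (0:ℝ) < exp (-(δ * t)) := exp_pos _
  have e2 : (0:ℝ) < exp (-(∫ s in (0:ℝ)..t, L (y s))) := exp_pos _
  calc |costI δ L R α y t|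
      = exp (-(δ * t)) * exp (-(∫ s in (0:ℝ)..t, L (y s))) * |R (y t) (α t)| := by
        rw [costI, abs_mul, abs_mul, abs_of_pos e1, abs_of_pos e2]
    _ ≤ exp (-(δ * t)) * 1 * MR := by
        apply mul_le_mul _ h3 (abs_nonneg _) (by positivity)
        exact mul_le_mul_of_nonneg_left h2 e1.le
    _ = MR * exp (-(δ * t)) := by ring

lemma bound_integrable (hδ : 0 < δ) (MR : ℝ) :
    IntegrableOn (fun t : ℝ => MR * exp (-(δ * t))) (Ioi (0:ℝ)) := by
  have := (exp_neg_integrableOn_Ioi 0 hδ).const_mul MR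
  simp only [neg_mul] at this
  exact this

lemma costI_integrableOn (hLc : Continuous L) (hδ : 0 < δ) (hMR : 0 ≤ MR)
    (hSm : MeasurableSet S)
    (hRc : ContinuousOn (fun p : Vec m × Vec d => R p.1 p.2) (S ×ˢ A))
    (hRb : ∀ z ∈ S, ∀ a ∈ A, |R z a| ≤ MR)
    (hLnn : ∀ z, 0 ≤ L z)
    (hFc : ContinuousOn (fun p : Vec m × Vec d => F p.1 p.2) (univ ×ˢ A))
    (hAm : MeasurableSet A) (hFb : ∀ z : Vec m, ∀ a ∈ A, ‖F z a‖ ≤ C)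
    (hα : Measurable α) (hαA : ∀ t, α t ∈ A) (hy : IsTraj F x α y)
    (hyS : ∀ t : ℝ, 0 ≤ t → y t ∈ S) :
    IntegrableOn (costI δ L R α y) (Ioi (0:ℝ)) := by
  refine Integrable.mono' (bound_integrable hδ MR)
    (costI_aesm hLc hδ hSm hRc hFc hAm hFb hα hαA hy hyS) ?_
  refine ae_restrict_of_forall_mem measurableSet_Ioi (fun t ht => ?_)
  rw [Real.norm_eq_abs]
  exact costI_bound hLnn hMR hRb hαA hyS t (le_of_lt ht)

lemma shift_admissible
    (hFc : ContinuousOn (fun p : Vec m × Vec d => F p.1 p.2) (univ ×ˢ A))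
    (hAm : MeasurableSet A) (hFb : ∀ z : Vec m, ∀ a ∈ A, ‖F z a‖ ≤ C)
    {T : ℝ} (hT : 0 ≤ T) (hp : AdmPair F A S x α y) :
    AdmPair F A S (y T) (fun t => α (T + t)) (fun t => y (T + t)) := by
  obtain ⟨hα, hαA, hy, hyS⟩ := hp
  refine ⟨hα.comp (measurable_const.add measurable_id), fun t => hαA _, ?_,
    fun t ht => hyS _ (by linarith)⟩
  intro t ht
  have h1 : IntervalIntegrable (fun s => F (y s) (α s)) volume 0 T :=
    traj_intervalIntegrable hFc hAm hFb hα hαA hy 0 T le_rfl hT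
  have h2 : IntervalIntegrable (fun s => F (y s) (α s)) volume T (T + t) :=
    traj_intervalIntegrable hFc hAm hFb hα hαA hy T (T + t) hT (by linarith)
  have hsplit := intervalIntegral.integral_add_adjacent_intervals h1 h2
  have hcv : ∫ s in (0:ℝ)..t, F (y (T + s)) (α (T + s))
      = ∫ s in T..(T + t), F (y s) (α s) := by
    have h3 := intervalIntegral.integral_comp_add_right
      (a := (0:ℝ)) (b := t) (fun s => F (y s) (α s)) T
    rw [zero_add] at h3
    calc ∫ s in (0:ℝ)..t, F (y (T + s)) (α (T + s))
        = ∫ s in (0:ℝ)..t, F (y (s + T)) (α (s + T)) := by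
          congr 1; funext s; rw [add_comm]
      _ = ∫ s in T..(t + T), F (y s) (α s) := h3
      _ = ∫ s in T..(T + t), F (y s) (α s) := by rw [add_comm t T]
  simp only
  rw [hcv, hy T hT, hy (T + t) (by linarith), add_assoc, hsplit]

lemma costI_shift
    (hLI : ∀ a b : ℝ, 0 ≤ a → 0 ≤ b → IntervalIntegrable (fun s => L (y s)) volume a b)
    {T t : ℝ} (hT : 0 ≤ T) (ht : 0 ≤ t) :
    costI δ L R α y (T + t)
      = (exp (-(δ * T)) * exp (-(∫ s in (0:ℝ)..T, L (y s)))) *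
        costI δ L R (fun s => α (T + s)) (fun s => y (T + s)) t := by
  have hadd : ∫ s in (0:ℝ)..(T + t), L (y s)
      = (∫ s in (0:ℝ)..T, L (y s)) + ∫ s in (0:ℝ)..t, L (y (T + s)) := by
    have h1 := hLI 0 T le_rfl hT
    have h2 := hLI T (T + t) hT (by linarith)
    have hsplit := intervalIntegral.integral_add_adjacent_intervals h1 h2
    have hcv : ∫ s in (0:ℝ)..t, L (y (T + s)) = ∫ s in T..(T + t), L (y s) := by
      have h3 := intervalIntegral.integral_comp_add_right
        (a := (0:ℝ)) (b := t) (fun s => L (y s)) T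
      rw [zero_add] at h3
      calc ∫ s in (0:ℝ)..t, L (y (T + s)) = ∫ s in (0:ℝ)..t, L (y (s + T)) := by
            congr 1; funext s; rw [add_comm]
        _ = ∫ s in T..(t + T), L (y s) := h3
        _ = ∫ s in T..(T + t), L (y s) := by rw [add_comm t T]
    rw [hcv, hsplit]
  rw [costI, costI, hadd]
  have e1 : exp (-(δ * (T + t))) = exp (-(δ * T)) * exp (-(δ * t)) := by
    rw [← exp_add]; ring_nf
  have e2 : exp (-((∫ s in (0:ℝ)..T, L (y s)) + ∫ s in (0:ℝ)..t, L (y (T + s))))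
      = exp (-(∫ s in (0:ℝ)..T, L (y s))) * exp (-(∫ s in (0:ℝ)..t, L (y (T + s)))) := by
    rw [← exp_add, neg_add]
  rw [e1, e2]; ring

lemma cost_split
    (hLc : Continuous L) (hδ : 0 < δ) (hMR : 0 ≤ MR) (hSm : MeasurableSet S)
    (hRc : ContinuousOn (fun p : Vec m × Vec d => R p.1 p.2) (S ×ˢ A))
    (hRb : ∀ z ∈ S, ∀ a ∈ A, |R z a| ≤ MR) (hLnn : ∀ z, 0 ≤ L z)
    (hFc : ContinuousOn (fun p : Vec m × Vec d => F p.1 p.2) (univ ×ˢ A))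
    (hAm : MeasurableSet A) (hFb : ∀ z : Vec m, ∀ a ∈ A, ‖F z a‖ ≤ C)
    {T : ℝ} (hT : 0 < T) (hp : AdmPair F A S x α y) :
    ∫ t in Ioi (0:ℝ), costI δ L R α y t
      = (∫ t in (0:ℝ)..T, costI δ L R α y t)
        + (exp (-(δ * T)) * exp (-(∫ s in (0:ℝ)..T, L (y s)))) *
          ∫ t in Ioi (0:ℝ), costI δ L R (fun s => α (T + s)) (fun s => y (T + s)) t := by
  obtain ⟨hα, hαA, hy, hyS⟩ := hp
  have hint : IntegrableOn (costI δ L R α y) (Ioi (0:ℝ)) :=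
    costI_integrableOn hLc hδ hMR hSm hRc hRb hLnn hFc hAm hFb hα hαA hy hyS
  have hunion : Ioi (0:ℝ) = Ioc 0 T ∪ Ioi T := (Ioc_union_Ioi_eq_Ioi hT.le).symm
  have hdisj : Disjoint (Ioc (0:ℝ) T) (Ioi T) := by
    refine disjoint_left.2 (fun a ha hb => ?_)
    exact absurd hb (not_lt.2 ha.2)
  have hsplit : ∫ t in Ioi (0:ℝ), costI δ L R α y t
      = (∫ t in Ioc (0:ℝ) T, costI δ L R α y t) + ∫ t in Ioi T, costI δ L R α y t := by
    rw [hunion]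
    exact setIntegral_union hdisj measurableSet_Ioi
      (hint.mono_set (by rw [hunion]; exact subset_union_left))
      (hint.mono_set (by rw [hunion]; exact subset_union_right))
  have htrans : ∫ t in Ioi T, costI δ L R α y t
      = ∫ t in Ioi (0:ℝ), costI δ L R α y (t + T) := by
    rw [← integral_indicator measurableSet_Ioi, ← integral_indicator measurableSet_Ioi]
    have h4 := integral_add_right_eq_self (μ := (volume : Measure ℝ))
      ((Ioi T).indicator (costI δ L R α y)) T
    rw [← h4]
    congr 1
    funext s
    have hiff : T < s + T ↔ 0 < s := by constructor <;> intro <;> linarith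
    by_cases hs : 0 < s
    · rw [indicator_of_mem (mem_Ioi.2 (hiff.2 hs)), indicator_of_mem (mem_Ioi.2 hs)]
    · rw [indicator_of_notMem (fun hmem => hs (hiff.1 (mem_Ioi.1 hmem))),
        indicator_of_notMem (fun hmem => hs (mem_Ioi.1 hmem))]
  have hLI : ∀ a b : ℝ, 0 ≤ a → 0 ≤ b → IntervalIntegrable (fun s => L (y s)) volume a b :=
    L_intervalIntegrable hLc hFc hAm hFb hα hαA hy
  have hcongr : ∫ t in Ioi (0:ℝ), costI δ L R α y (t + T)
      = ∫ t in Ioi (0:ℝ), (exp (-(δ * T)) * exp (-(∫ s in (0:ℝ)..T, L (y s)))) *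
          costI δ L R (fun s => α (T + s)) (fun s => y (T + s)) t := by
    refine setIntegral_congr_fun measurableSet_Ioi (fun t ht => ?_)
    rw [add_comm]
    exact costI_shift hLI hT.le (le_of_lt ht)
  have head : ∫ t in Ioc (0:ℝ) T, costI δ L R α y t = ∫ t in (0:ℝ)..T, costI δ L R α y t :=
    (intervalIntegral.integral_of_le hT.le).symm
  rw [hsplit, htrans, hcongr, integral_const_mul, head]

lemma ae_ne_real (T : ℝ) : ∀ᵐ s : ℝ ∂volume, s ≠ T := by
  rw [ae_iff]
  have h : {s : ℝ | ¬ s ≠ T} = {T} := by ext s; simp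
  rw [h]
  exact measure_singleton T

lemma concat_admissible
    (hFc : ContinuousOn (fun p : Vec m × Vec d => F p.1 p.2) (univ ×ˢ A))
    (hAm : MeasurableSet A) (hFb : ∀ z : Vec m, ∀ a ∈ A, ‖F z a‖ ≤ C)
    {T : ℝ} (hT : 0 ≤ T) {α' : ℝ → Vec d} {y' : ℝ → Vec m}
    (hp : AdmPair F A S x α y) (hp' : AdmPair F A S (y T) α' y') :
    AdmPair F A S x (fun t => if t < T then α t else α' (t - T))
      (fun t => if t < T then y t else y' (t - T)) := by
  obtain ⟨hα, hαA, hy, hyS⟩ := hp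
  obtain ⟨hα', hαA', hy', hyS'⟩ := hp'
  have hy'0 : y' 0 = y T := by
    have h := hy' 0 le_rfl
    simpa using h
  refine ⟨Measurable.ite measurableSet_Iio hα (hα'.comp (measurable_id.sub measurable_const)),
    fun t => ?_, ?_, fun t ht => ?_⟩
  · by_cases h : t < T
    · simpa [h] using hαA t
    · simpa [h] using hαA' (t - T)
  · intro t ht
    simp only
    set yh : ℝ → Vec m := fun s => if s < T then y s else y' (s - T) with hyh
    set ah : ℝ → Vec d := fun s => if s < T then α s else α' (s - T) with hah
    have heq1 : ∀ s : ℝ, s < T → F (yh s) (ah s) = F (y s) (α s) := by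
      intro s hs; simp [hyh, hah, hs]
    have heq2 : ∀ s : ℝ, T ≤ s → F (yh s) (ah s) = F (y' (s - T)) (α' (s - T)) := by
      intro s hs; simp [hyh, hah, not_lt.2 hs]
    rcases le_or_gt t T with htT | htT
    · have hIeq : ∫ s in (0:ℝ)..t, F (yh s) (ah s) = ∫ s in (0:ℝ)..t, F (y s) (α s) := by
        refine intervalIntegral.integral_congr_ae ?_
        filter_upwards [ae_ne_real T] with s hsne hmem
        rw [uIoc_of_le ht] at hmem
        exact heq1 s (lt_of_le_of_ne (hmem.2.trans htT) hsne)
      rw [hIeq]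
      by_cases h : t < T
      · simp only [hyh, if_pos h]
        exact hy t ht
      · have hEq : t = T := le_antisymm htT (not_lt.1 h)
        simp only [hyh, if_neg h, hEq, sub_self, hy'0, lt_self_iff_false, if_false]
        exact hy T hT
    · have h1 : IntervalIntegrable (fun s => F (yh s) (ah s)) volume 0 T := by
        rw [intervalIntegrable_iff_integrableOn_Ioc_of_le hT]
        refine (traj_integrableOn hFc hAm hFb hα hαA hy T).congr ?_
        filter_upwards [ae_restrict_of_ae (ae_ne_real T),
          ae_restrict_mem measurableSet_Ioc] with s hsne hmem
        exact (heq1 s (lt_of_le_of_ne hmem.2 hsne)).symm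
      have h2 : IntervalIntegrable (fun s => F (yh s) (ah s)) volume T t := by
        have hg' : IntervalIntegrable (fun s => F (y' s) (α' s)) volume 0 (t - T) :=
          traj_intervalIntegrable hFc hAm hFb hα' hαA' hy' 0 (t - T) le_rfl (by linarith)
        have h3 := hg'.comp_sub_right T
        rw [zero_add, sub_add_cancel] at h3
        rw [intervalIntegrable_iff_integrableOn_Ioc_of_le htT.le] at h3 ⊢
        exact h3.congr_fun (fun s hs => (heq2 s hs.1.le).symm) measurableSet_Ioc
      have hsplit := intervalIntegral.integral_add_adjacent_intervals h1 h2
      have hI1 : ∫ s in (0:ℝ)..T, F (yh s) (ah s) = ∫ s in (0:ℝ)..T, F (y s) (α s) := by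
        refine intervalIntegral.integral_congr_ae ?_
        filter_upwards [ae_ne_real T] with s hsne hmem
        rw [uIoc_of_le hT] at hmem
        exact heq1 s (lt_of_le_of_ne hmem.2 hsne)
      have hI2 : ∫ s in T..t, F (yh s) (ah s) = ∫ s in (0:ℝ)..(t - T), F (y' s) (α' s) := by
        have e1 : ∫ s in T..t, F (yh s) (ah s)
            = ∫ s in T..t, F (y' (s - T)) (α' (s - T)) := by
          refine intervalIntegral.integral_congr (fun s hs => ?_)
          rw [uIcc_of_le htT.le] at hs
          exact heq2 s hs.1
        have e2 := intervalIntegral.integral_comp_sub_right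
          (a := T) (b := t) (fun s => F (y' s) (α' s)) T
        rw [sub_self] at e2
        rw [e1, e2]
      rw [← hsplit, hI1, hI2, if_neg (not_lt.2 htT.le)]
      rw [hy' (t - T) (by linarith), hy T hT]
      abel
  · by_cases h : t < T
    · simpa [h] using hyS t ht
    · simpa [h] using hyS' (t - T) (by simpa using not_lt.1 h)

lemma concat_cost
    (hLc : Continuous L) (hδ : 0 < δ) (hMR : 0 ≤ MR) (hSm : MeasurableSet S)
    (hRc : ContinuousOn (fun p : Vec m × Vec d => R p.1 p.2) (S ×ˢ A))
    (hRb : ∀ z ∈ S, ∀ a ∈ A, |R z a| ≤ MR) (hLnn : ∀ z, 0 ≤ L z)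
    (hFc : ContinuousOn (fun p : Vec m × Vec d => F p.1 p.2) (univ ×ˢ A))
    (hAm : MeasurableSet A) (hFb : ∀ z : Vec m, ∀ a ∈ A, ‖F z a‖ ≤ C)
    {T : ℝ} (hT : 0 < T) {α' : ℝ → Vec d} {y' : ℝ → Vec m}
    (hp : AdmPair F A S x α y) (hp' : AdmPair F A S (y T) α' y') :
    ∫ t in Ioi (0:ℝ), costI δ L R (fun t => if t < T then α t else α' (t - T))
        (fun t => if t < T then y t else y' (t - T)) t
      = (∫ t in (0:ℝ)..T, costI δ L R α y t)
        + (exp (-(δ * T)) * exp (-(∫ s in (0:ℝ)..T, L (y s)))) *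
          ∫ t in Ioi (0:ℝ), costI δ L R α' y' t := by
  set ah : ℝ → Vec d := fun s => if s < T then α s else α' (s - T) with hah
  set yh : ℝ → Vec m := fun s => if s < T then y s else y' (s - T) with hyh
  have hy'0 : y' 0 = y T := by
    have h := hp'.2.2.1 0 le_rfl
    simpa using h
  have hcat : AdmPair F A S x ah yh := concat_admissible hFc hAm hFb hT.le hp hp'
  have hsplit := cost_split hLc hδ hMR hSm hRc hRb hLnn hFc hAm hFb hT hcat
  have hyh_eq : ∀ s : ℝ, s ≤ T → yh s = y s := by
    intro s hs
    by_cases h : s < T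
    · simp [hyh, h]
    · have : s = T := le_antisymm hs (not_lt.1 h)
      simp [hyh, h, this, hy'0]
  have hell : ∀ u : ℝ, 0 ≤ u → u ≤ T →
      (∫ s in (0:ℝ)..u, L (yh s)) = ∫ s in (0:ℝ)..u, L (y s) := by
    intro u hu huT
    refine intervalIntegral.integral_congr (fun s hs => ?_)
    rw [uIcc_of_le hu] at hs
    rw [hyh_eq s (hs.2.trans huT)]
  have hhead : ∫ t in (0:ℝ)..T, costI δ L R ah yh t
      = ∫ t in (0:ℝ)..T, costI δ L R α y t := by
    refine intervalIntegral.integral_congr_ae ?_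
    filter_upwards [ae_ne_real T] with t htne hmem
    rw [uIoc_of_le hT.le] at hmem
    have htlt : t < T := lt_of_le_of_ne hmem.2 htne
    rw [costI, costI, hell t hmem.1.le hmem.2]
    have h1 : yh t = y t := hyh_eq t hmem.2
    have h2 : ah t = α t := by simp [hah, htlt]
    rw [h1, h2]
  have hfac : (∫ s in (0:ℝ)..T, L (yh s)) = ∫ s in (0:ℝ)..T, L (y s) := hell T hT.le le_rfl
  have htail : ∫ t in Ioi (0:ℝ), costI δ L R (fun s => ah (T + s)) (fun s => yh (T + s)) t
      = ∫ t in Ioi (0:ℝ), costI δ L R α' y' t := by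
    have haT : ∀ s : ℝ, 0 ≤ s → ah (T + s) = α' s := by
      intro s hs
      simp only [hah]
      rw [if_neg (by linarith), add_sub_cancel_left]
    have hyT : ∀ s : ℝ, 0 ≤ s → yh (T + s) = y' s := by
      intro s hs
      simp only [hyh]
      rw [if_neg (by linarith), add_sub_cancel_left]
    refine setIntegral_congr_fun measurableSet_Ioi (fun t ht => ?_)
    have ht' : (0:ℝ) ≤ t := le_of_lt ht
    rw [costI, costI, haT t ht', hyT t ht']
    have : (∫ s in (0:ℝ)..t, L (yh (T + s))) = ∫ s in (0:ℝ)..t, L (y' s) := by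
      refine intervalIntegral.integral_congr (fun s hs => ?_)
      rw [uIcc_of_le ht'] at hs
      rw [hyT s hs.1]
    rw [this]
  rw [hsplit, hhead, hfac, htail]

lemma lipschitz_continuous {g : Vec m → ℝ} {C : ℝ}
    (h : ∀ z w : Vec m, |g z - g w| ≤ C * ‖z - w‖) : Continuous g := by
  have : LipschitzWith (Real.toNNReal C) g := by
    refine LipschitzWith.of_dist_le_mul (fun z w => ?_)
    rw [Real.dist_eq, dist_eq_norm]
    exact le_trans (h z w)
      (mul_le_mul_of_nonneg_right (Real.le_coe_toNNReal C) (norm_nonneg _))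
  exact this.continuous

lemma cost_full_abs_le (hLnn : ∀ z, 0 ≤ L z) (hδ : 0 < δ) (hMR : 0 ≤ MR)
    (hRb : ∀ z ∈ S, ∀ a ∈ A, |R z a| ≤ MR)
    (hαA : ∀ t, α t ∈ A) (hyS : ∀ t : ℝ, 0 ≤ t → y t ∈ S) :
    |∫ t in Ioi (0:ℝ), costI δ L R α y t| ≤ ∫ t in Ioi (0:ℝ), MR * exp (-(δ * t)) := by
  rw [← Real.norm_eq_abs]
  refine norm_integral_le_of_norm_le (bound_integrable hδ MR) ?_
  refine ae_restrict_of_forall_mem measurableSet_Ioi (fun t ht => ?_)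
  rw [Real.norm_eq_abs]
  exact costI_bound hLnn hMR hRb hαA hyS t (le_of_lt ht)

lemma cost_head_abs_le (hLnn : ∀ z, 0 ≤ L z) (hδ : 0 < δ) (hMR : 0 ≤ MR)
    (hRb : ∀ z ∈ S, ∀ a ∈ A, |R z a| ≤ MR)
    (hαA : ∀ t, α t ∈ A) (hyS : ∀ t : ℝ, 0 ≤ t → y t ∈ S) {T : ℝ} (hT : 0 ≤ T) :
    |∫ t in (0:ℝ)..T, costI δ L R α y t| ≤ ∫ t in Ioi (0:ℝ), MR * exp (-(δ * t)) := by
  rw [intervalIntegral.integral_of_le hT, ← Real.norm_eq_abs]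
  have hb : IntegrableOn (fun t : ℝ => MR * exp (-(δ * t))) (Ioc 0 T) :=
    (bound_integrable hδ MR).mono_set Ioc_subset_Ioi_self
  refine le_trans (norm_integral_le_of_norm_le hb ?_) ?_
  · refine ae_restrict_of_forall_mem measurableSet_Ioc (fun t ht => ?_)
    rw [Real.norm_eq_abs]
    exact costI_bound hLnn hMR hRb hαA hyS t (le_of_lt ht.1)
  · refine setIntegral_mono_set (bound_integrable hδ MR) ?_
      (HasSubset.Subset.eventuallyLE Ioc_subset_Ioi_self)
    exact ae_of_all _ (fun t => by positivity)

end Helpers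

lemma isCompact_Gbar {m N : ℕ} (e : Fin N → Vec m) : IsCompact (Gbar e) := by
  refine isCompact_iUnion (fun j => ?_)
  exact isCompact_Icc.image (continuous_id.smul continuous_const)


/-- Dynamic programming principle for the iterated value functions:
if `λ` and `Q` do not depend on the control and `v_M^δ(·,γ)` is continuous on `Ḡ`,
then for every horizon `T > 0` the iterate `v_{M+1}^δ` equals the infimum over
admissible controls of the discounted one-jump cost up to `T` with continuation
value `v_M^δ` and terminal value `v_{M+1}^δ`. -/
theorem dpp_iterated_value
    (m d N : ℕ) (hm : 1 ≤ m) (hd : 1 ≤ d) (hN : 2 ≤ N)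
    (E : Type) [Fintype E] [Nonempty E]
    (e : Fin N → Vec m) (he : ∀ j, ‖e j‖ = 1) (heinj : Function.Injective e)
    (A : Set (Vec d)) (hAcomp : IsCompact A)
    (f : E → Vec m → Vec d → Vec m)
    (C : ℝ) (hC : 0 < C) (hA1 : AssumptionA1 A f C)
    (Asets : E → Fin N → Set (Vec d)) (act : Fin N → Set E)
    (β η κc : ℝ) (hβ : 0 < β) (hη : η ∈ Ioo (0:ℝ) 1) (hκ : κc ∈ Ico (0:ℝ) 1)
    (hAa : AssumptionAa e A f Asets β)
    (hAb : AssumptionAb e f Asets act β η κc)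
    (δ : ℝ) (hδ : 0 < δ)
    (l : E → Vec m → Vec d → ℝ) (hA4 : AssumptionA4 A l C)
    (hAc : AssumptionAc l Asets act)
    (lam0 : Vec m → E → ℝ) (hA2 : AssumptionA2 A (fun x γ _ => lam0 x γ) C)
    (Q0 : Vec m → E → E → ℝ) (hA3 : AssumptionA3 A (fun x γ γ' _ => Q0 x γ γ') C)
    (v : ℕ → Vec m → E → ℝ)
    (hv0 : ∀ x ∈ Gbar e, ∀ γ : E,
        v 0 x γ = sInf (v0Set δ f (fun _ => A) (Gbar e) l x γ))
    (hvrec : ∀ n : ℕ, ∀ x ∈ Gbar e, ∀ γ : E,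
        v (n+1) x γ = sInf (iterSet δ f (fun _ => A) (Gbar e) l
          (fun z γ' _ => lam0 z γ') (fun z γ' γ'' _ => Q0 z γ' γ'') (v n) x γ))
    (M : ℕ)
    (hMcont : ∀ γ : E, ContinuousOn (fun x => v M x γ) (Gbar e)) :
    ∀ T > (0:ℝ), ∀ x ∈ Gbar e, ∀ γ : E,
      v (M+1) x γ = sInf (dppSet δ T f (fun _ => A) (Gbar e) l
        (fun z γ' _ => lam0 z γ') (fun z γ' γ'' _ => Q0 z γ' γ'')
        (v M) (v (M+1)) x γ) := by
  intro T hT x hx γ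
  classical
  have hj0 : 0 < N := by omega
  obtain ⟨a0, ha0s⟩ := (hAa.1 γ ⟨0, hj0⟩).1
  have ha0A : a0 ∈ A := (hAa.1 γ ⟨0, hj0⟩).2 ha0s
  have hScomp : IsCompact (Gbar e) := isCompact_Gbar e
  have hSm : MeasurableSet (Gbar e) := hScomp.measurableSet
  have hAm : MeasurableSet A := hAcomp.measurableSet
  have hFc : ContinuousOn (fun p : Vec m × Vec d => f γ p.1 p.2) (univ ×ˢ A) :=
    (hA1 γ).1.continuousOn
  have hFb : ∀ z : Vec m, ∀ a ∈ A, ‖f γ z a‖ ≤ C := fun z a ha => (hA1 γ).2.2 z a ha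
  set L : Vec m → ℝ := fun z => lam0 z γ with hLdef
  have hLnn : ∀ z, 0 ≤ L z := fun z => ((hA2 γ).2 z z a0 ha0A).1
  have hLbd : ∀ z, L z ≤ C := fun z => ((hA2 γ).2 z z a0 ha0A).2.1
  have hLc : Continuous L :=
    lipschitz_continuous (C := C) (fun z w => ((hA2 γ).2 z w a0 ha0A).2.2)
  have hQc : ∀ γ' : E, Continuous (fun z => Q0 z γ γ') := fun γ' =>
    lipschitz_continuous (C := C) (fun z w => (hA3 z w γ a0 ha0A).2.2.2 γ')
  have hQnn : ∀ (z : Vec m) (γ' : E), 0 ≤ Q0 z γ γ' :=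
    fun z γ' => ((hA3 z z γ a0 ha0A).1 γ').1
  have hQsum : ∀ z : Vec m, (∑ γ' : E, Q0 z γ γ') = 1 :=
    fun z => (hA3 z z γ a0 ha0A).2.1
  obtain ⟨K, hK0, hKb⟩ : ∃ K : ℝ, 0 ≤ K ∧ ∀ z ∈ Gbar e, ∀ γ' : E, |v M z γ'| ≤ K := by
    choose Kf hKf using fun γ' : E => hScomp.exists_bound_of_continuousOn (hMcont γ')
    refine ⟨max 0 (Finset.univ.sup' Finset.univ_nonempty Kf), le_max_left _ _,
      fun z hz γ' => ?_⟩
    have h1 : |v M z γ'| ≤ Kf γ' := by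
      have h2 := hKf γ' z hz
      rwa [Real.norm_eq_abs] at h2
    exact h1.trans (le_max_of_le_right (Finset.le_sup' Kf (Finset.mem_univ γ')))
  set R : Vec m → Vec d → ℝ :=
    fun z a => l γ z a + lam0 z γ * ∑ γ' : E, Q0 z γ γ' * v M z γ' with hRdef
  set MR : ℝ := C + C * K with hMRdef
  have hMR : 0 ≤ MR := add_nonneg hC.le (mul_nonneg hC.le hK0)
  have hRb : ∀ z ∈ Gbar e, ∀ a ∈ A, |R z a| ≤ MR := by
    intro z hz a ha
    have h1 : |l γ z a| ≤ C := ((hA4 γ).2 z z a ha).1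
    have h2 : |∑ γ' : E, Q0 z γ γ' * v M z γ'| ≤ K := by
      refine le_trans (Finset.abs_sum_le_sum_abs _ _) ?_
      have h3 : ∀ γ' ∈ Finset.univ, |Q0 z γ γ' * v M z γ'| ≤ Q0 z γ γ' * K := by
        intro γ' _
        rw [abs_mul, abs_of_nonneg (hQnn z γ')]
        exact mul_le_mul_of_nonneg_left (hKb z hz γ') (hQnn z γ')
      refine le_trans (Finset.sum_le_sum h3) ?_
      rw [← Finset.sum_mul, hQsum z, one_mul]
    have h3 : 0 ≤ lam0 z γ := hLnn z
    have h4 : lam0 z γ ≤ C := hLbd z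
    calc |R z a|
        ≤ |l γ z a| + lam0 z γ * |∑ γ' : E, Q0 z γ γ' * v M z γ'| := by
          rw [hRdef]
          refine le_trans (abs_add_le _ _) ?_
          rw [abs_mul, abs_of_nonneg h3]
      _ ≤ C + C * K := add_le_add h1 (mul_le_mul h4 h2 (abs_nonneg _) hC.le)
  have hRc : ContinuousOn (fun p : Vec m × Vec d => R p.1 p.2) (Gbar e ×ˢ A) := by
    rw [hRdef]
    refine ContinuousOn.add ?_ ?_
    · exact ((hA4 γ).1.continuousOn).mono (fun p hp => ⟨mem_univ _, hp.2⟩)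
    · refine ContinuousOn.mul ((hLc.comp continuous_fst).continuousOn) ?_
      refine continuousOn_finset_sum _ (fun γ' _ => ?_)
      exact (((hQc γ').comp continuous_fst).continuousOn).mul
        ((hMcont γ').comp continuousOn_fst (fun p hp => hp.1))
  set Sf : Vec m → Set ℝ := fun z =>
    {c | ∃ (αf : ℝ → Vec d) (yf : ℝ → Vec m), AdmPair (f γ) A (Gbar e) z αf yf ∧
      c = ∫ t in Ioi (0:ℝ), costI δ L R αf yf t} with hSfdef
  have hiterEq : ∀ z ∈ Gbar e, v (M+1) z γ = sInf (Sf z) := by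
    intro z hz
    rw [hvrec M z hz γ]
    rfl
  set Df : Set ℝ :=
    {c | ∃ (αf : ℝ → Vec d) (yf : ℝ → Vec m), AdmPair (f γ) A (Gbar e) x αf yf ∧
      c = (∫ t in (0:ℝ)..T, costI δ L R αf yf t)
        + exp (-(δ * T)) * exp (-(∫ s in (0:ℝ)..T, L (yf s))) * v (M+1) (yf T) γ}
    with hDfdef
  have hdppEq : dppSet δ T f (fun _ => A) (Gbar e) l (fun z γ' _ => lam0 z γ')
      (fun z γ' γ'' _ => Q0 z γ' γ'') (v M) (v (M+1)) x γ = Df := rfl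
  rw [hdppEq]
  set B : ℝ := ∫ t in Ioi (0:ℝ), MR * exp (-(δ * t)) with hBdef
  have hB0 : 0 ≤ B := integral_nonneg (fun t => by positivity)
  have hlow : ∀ (z : Vec m) (c : ℝ), c ∈ Sf z → -B ≤ c := by
    rintro z c ⟨αf, yf, hpf, rfl⟩
    have h1 := cost_full_abs_le (A := A) (S := Gbar e) hLnn hδ hMR hRb
      hpf.2.1 hpf.2.2.2
    rw [abs_le] at h1
    exact h1.1
  have hbddS : ∀ z : Vec m, BddBelow (Sf z) := fun z => ⟨-B, fun c hc => hlow z c hc⟩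
  have hvlow : ∀ z ∈ Gbar e, -B ≤ v (M+1) z γ := by
    intro z hz
    rw [hiterEq z hz]
    rcases (Sf z).eq_empty_or_nonempty with h | h
    · rw [h, Real.sInf_empty]; linarith
    · exact le_csInf h (fun c hc => hlow z c hc)
  rcases (Sf x).eq_empty_or_nonempty with hemp | hne
  · have hDemp : Df = ∅ := by
      rw [eq_empty_iff_forall_notMem]
      rintro c ⟨αf, yf, hpf, rfl⟩
      rw [eq_empty_iff_forall_notMem] at hemp
      exact hemp _ ⟨αf, yf, hpf, rfl⟩
    rw [hiterEq x hx, hemp, hDemp]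
  · have hfac_pos : ∀ yf : ℝ → Vec m,
        0 < exp (-(δ * T)) * exp (-(∫ s in (0:ℝ)..T, L (yf s))) := fun yf => by positivity
    have hfac_le_one : ∀ yf : ℝ → Vec m,
        exp (-(δ * T)) * exp (-(∫ s in (0:ℝ)..T, L (yf s))) ≤ 1 := by
      intro yf
      have h1 : exp (-(δ * T)) ≤ 1 := by
        rw [exp_le_one_iff]
        nlinarith
      have h2 : exp (-(∫ s in (0:ℝ)..T, L (yf s))) ≤ 1 := by
        rw [exp_le_one_iff, neg_nonpos]
        exact intervalIntegral.integral_nonneg hT.le (fun u _ => hLnn _)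
      exact mul_le_one₀ h1 (exp_pos _).le h2
    apply le_antisymm
    · have hDne : Df.Nonempty := by
        obtain ⟨c, αf, yf, hpf, hc⟩ := hne
        exact ⟨_, ⟨αf, yf, hpf, rfl⟩⟩
      refine le_csInf hDne ?_
      rintro c ⟨αf, yf, hpf, rfl⟩
      have hsh := shift_admissible hFc hAm hFb hT.le hpf
      have hyT : yf T ∈ Gbar e := hpf.2.2.2 T hT.le
      have htail_ne : (Sf (yf T)).Nonempty := ⟨_, _, _, hsh, rfl⟩
      rw [hiterEq x hx]
      refine le_of_forall_pos_le_add (fun ε hε => ?_)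
      obtain ⟨ct, hmemt, hlt⟩ := Real.lt_sInf_add_pos htail_ne hε
      obtain ⟨α', y', hp', hct⟩ := hmemt
      have hcost := concat_cost hLc hδ hMR hSm hRc hRb hLnn hFc hAm hFb hT hpf hp'
      have hmem : ((∫ t in (0:ℝ)..T, costI δ L R αf yf t)
          + (exp (-(δ * T)) * exp (-(∫ s in (0:ℝ)..T, L (yf s)))) * ct) ∈ Sf x :=
        ⟨_, _, concat_admissible hFc hAm hFb hT.le hpf hp', by rw [hcost, hct]⟩
      have h1 := csInf_le (hbddS x) hmem
      have hvT : v (M+1) (yf T) γ = sInf (Sf (yf T)) := hiterEq _ hyT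
      rw [← hvT] at hlt
      have hf1 := hfac_pos yf
      have hf2 := hfac_le_one yf
      nlinarith [h1, hlt, hf1, hf2, hε]
    · rw [hiterEq x hx]
      refine le_csInf hne ?_
      rintro c ⟨αf, yf, hpf, rfl⟩
      have hsh := shift_admissible hFc hAm hFb hT.le hpf
      have hyT : yf T ∈ Gbar e := hpf.2.2.2 T hT.le
      have hsplit := cost_split hLc hδ hMR hSm hRc hRb hLnn hFc hAm hFb hT hpf
      have htail_mem : (∫ t in Ioi (0:ℝ),
          costI δ L R (fun s => αf (T + s)) (fun s => yf (T + s)) t) ∈ Sf (yf T) :=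
        ⟨_, _, hsh, rfl⟩
      have htail_ge : v (M+1) (yf T) γ ≤ ∫ t in Ioi (0:ℝ),
          costI δ L R (fun s => αf (T + s)) (fun s => yf (T + s)) t := by
        rw [hiterEq _ hyT]
        exact csInf_le (hbddS _) htail_mem
      have hbddD : BddBelow Df := by
        refine ⟨-(B + B), ?_⟩
        rintro c ⟨αg, yg, hpg, rfl⟩
        have hhead := cost_head_abs_le (A := A) (S := Gbar e) hLnn hδ hMR hRb
          hpg.2.1 hpg.2.2.2 hT.le
        rw [abs_le] at hhead
        have hv := hvlow (yg T) (hpg.2.2.2 T hT.le)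
        have hf1 := hfac_pos yg
        have hf2 := hfac_le_one yg
        nlinarith [hhead.1, hv, hf1, hf2, hB0]
      have hDmem : ((∫ t in (0:ℝ)..T, costI δ L R αf yf t)
          + exp (-(δ * T)) * exp (-(∫ s in (0:ℝ)..T, L (yf s))) * v (M+1) (yf T) γ) ∈ Df :=
        ⟨αf, yf, hpf, rfl⟩
      refine le_trans (csInf_le hbddD hDmem) ?_
      rw [hsplit]
      exact add_le_add_right
        (mul_le_mul_of_nonneg_left htail_ge (hfac_pos yf).le) _
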